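/- Let 0 < r ≤ 1, let v be a submultiplicative weight on ℝ^d (v even, v(x+y) ≤ v(x)v(y)), let ω be a v-moderate weight (ω(x+y) ≤ C ω(x) v(y)), and let p ∈ [r, ∞]. Then for sequences a ∈ ℓ^r_{(v)}(ℤ^d) and b ∈ ℓ^p_{(ω)}(ℤ^d), the convolution a*b satisfies ‖a*b‖_{ℓ^p_{(ω)}} ≤ C ‖a‖_{ℓ^r_{(v)}} ‖b‖_{ℓ^p_{(ω)}}, where ‖c‖_{ℓ^p_{(μ)}} = ‖c·μ‖_{ℓ^p} denotes the weighted quasi-norm. -/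

import Mathlib

open MeasureTheory
open scoped ENNReal NNReal

lemma aux_rpow_tsum_le {ι : Type*} (f : ι → ℝ≥0∞) {q : ℝ} (h0 : 0 < q) (h1 : q ≤ 1) :
    (∑' i, f i) ^ q ≤ ∑' i, f i ^ q := by
  rw [ENNReal.tsum_eq_iSup_sum, ← ENNReal.le_rpow_inv_iff h0]
  refine iSup_le fun s => ?_
  rw [ENNReal.le_rpow_inv_iff h0]
  calc (∑ i ∈ s, f i) ^ q ≤ ∑ i ∈ s, f i ^ q := by
        classical
        induction s using Finset.induction with
        | empty => simp [ENNReal.zero_rpow_of_pos h0]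
        | insert _ _ hx ih =>
            rw [Finset.sum_insert hx, Finset.sum_insert hx]
            exact le_trans (ENNReal.rpow_add_le_add_rpow _ _ h0.le h1)
              (add_le_add le_rfl ih)
    _ ≤ ∑' i, f i ^ q := ENNReal.sum_le_tsum s

lemma aux_lr_le_lq {ι : Type*} (f : ι → ℝ≥0∞) {r q : ℝ} (h0 : 0 < r) (hrq : r ≤ q) :
    (∑' i, f i ^ q) ^ (1 / q) ≤ (∑' i, f i ^ r) ^ (1 / r) := by
  have hq0 : 0 < q := h0.trans_le hrq
  have key : (∑' i, f i ^ q) ^ (r / q) ≤ ∑' i, f i ^ r := by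
    have := aux_rpow_tsum_le (fun i => f i ^ q) (q := r / q) (div_pos h0 hq0)
      ((div_le_one hq0).2 hrq)
    simpa [← ENNReal.rpow_mul, mul_div_cancel₀ _ hq0.ne'] using this
  have := ENNReal.rpow_le_rpow key (by positivity : (0:ℝ) ≤ 1 / r)
  rwa [← ENNReal.rpow_mul, show r / q * (1 / r) = 1 / q by field_simp] at this

lemma aux_l1_le_lr {ι : Type*} (f : ι → ℝ≥0∞) {r : ℝ} (h0 : 0 < r) (hr1 : r ≤ 1) :
    ∑' i, f i ≤ (∑' i, f i ^ r) ^ (1 / r) := by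
  simpa using aux_lr_le_lq f h0 hr1

lemma aux_holder {ι : Type*} (f g : ι → ℝ≥0∞) {s t : ℝ} (h : s.HolderConjugate t) :
    ∑' i, f i * g i ≤ (∑' i, f i ^ s) ^ (1 / s) * (∑' i, g i ^ t) ^ (1 / t) := by
  letI : MeasurableSpace ι := ⊤
  haveI : MeasurableSingletonClass ι := ⟨fun _ => MeasurableSpace.measurableSet_top⟩
  have hf : AEMeasurable f Measure.count :=
    (Measurable.aemeasurable (fun _ _ => MeasurableSpace.measurableSet_top))
  have hg : AEMeasurable g Measure.count :=
    (Measurable.aemeasurable (fun _ _ => MeasurableSpace.measurableSet_top))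
  have := ENNReal.lintegral_mul_le_Lp_mul_Lq Measure.count h hf hg
  simpa [lintegral_count] using this

lemma aux_young {G : Type*} [AddCommGroup G] (A B : G → ℝ≥0∞) {q : ℝ} (hq : 1 ≤ q) :
    (∑' j, (∑' k, A k * B (j - k)) ^ q) ^ (1 / q) ≤
      (∑' k, A k) * (∑' j, B j ^ q) ^ (1 / q) := by
  have hq0 : (0:ℝ) < q := lt_of_lt_of_le one_pos hq
  have reindex : ∀ (k : G) (f : G → ℝ≥0∞), ∑' j, f (j - k) = ∑' j, f j :=
    fun k f => (Equiv.subRight k).tsum_eq f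
  have h1q : (0:ℝ) < q⁻¹ := by positivity
  by_cases hB0 : ∑' j, B j ^ q = 0
  · have hBz : ∀ m, B m = 0 := by
      intro m
      have := (ENNReal.tsum_eq_zero.1 hB0) m
      rcases (ENNReal.rpow_eq_zero_iff).1 this with ⟨h1, _⟩ | ⟨_, h2⟩
      · exact h1
      · linarith
    simp [hBz, ENNReal.zero_rpow_of_pos hq0, ENNReal.zero_rpow_of_pos h1q]
  by_cases hA0 : ∑' k, A k = 0
  · have hAz : ∀ m, A m = 0 := fun m => (ENNReal.tsum_eq_zero.1 hA0) m
    simp [hAz, ENNReal.zero_rpow_of_pos hq0, ENNReal.zero_rpow_of_pos h1q]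
  by_cases hAtop : ∑' k, A k = ⊤
  · have hX : (∑' j, B j ^ q) ^ (1 / q) ≠ 0 := by
      intro h
      rcases ENNReal.rpow_eq_zero_iff.1 h with ⟨h1, _⟩ | ⟨_, h2⟩
      · exact hB0 h1
      · have : (0:ℝ) < 1/q := by positivity
        linarith
    rw [hAtop, ENNReal.top_mul hX]
    exact le_top
  rcases eq_or_lt_of_le hq with hq1 | hq1
  · subst hq1
    simp only [ENNReal.rpow_one, one_div_one]
    calc ∑' j, ∑' k, A k * B (j - k) = ∑' k, ∑' j, A k * B (j - k) := ENNReal.tsum_comm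
      _ = ∑' k, A k * ∑' j, B (j - k) := by
          refine tsum_congr fun k => ?_; rw [ENNReal.tsum_mul_left]
      _ = ∑' k, A k * ∑' j, B j := by
          refine tsum_congr fun k => by rw [reindex k B]
      _ = (∑' k, A k) * ∑' j, B j := ENNReal.tsum_mul_right
      _ ≤ (∑' k, A k) * ∑' j, B j := le_rfl
  · set t := Real.conjExponent q with ht
    have hconj : q.HolderConjugate t := Real.HolderConjugate.conjExponent hq1
    have ht0 : (0:ℝ) < t := hconj.symm.pos
    have hqt : q / t = q - 1 := hconj.div_conj_eq_sub_one
    have pointwise : ∀ j : G, (∑' k, A k * B (j - k)) ^ q ≤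
        (∑' k, A k) ^ (q / t) * ∑' k, A k * B (j - k) ^ q := by
      intro j
      have step1 : ∑' k, A k * B (j - k) =
          ∑' k, (A k ^ (1/t)) * (A k ^ (1/q) * B (j - k)) := by
        refine tsum_congr fun k => ?_
        rw [← mul_assoc, ← ENNReal.rpow_add_of_nonneg _ _ (by positivity) (by positivity)]
        rw [show 1/t + 1/q = 1 by
          have := hconj.inv_add_inv_eq_one; rw [one_div, one_div]; linarith]
        rw [ENNReal.rpow_one]
      have step2 : ∑' k, (A k ^ (1/t)) * (A k ^ (1/q) * B (j - k)) ≤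
          (∑' k, (A k ^ (1/t)) ^ t) ^ (1/t) * (∑' k, (A k ^ (1/q) * B (j - k)) ^ q) ^ (1/q) :=
        aux_holder _ _ hconj.symm
      have e1 : ∀ k, (A k ^ (1/t)) ^ t = A k := fun k => by
        rw [← ENNReal.rpow_mul, one_div, inv_mul_cancel₀ ht0.ne', ENNReal.rpow_one]
      have e2 : ∀ k, (A k ^ (1/q) * B (j - k)) ^ q = A k * B (j - k) ^ q := fun k => by
        rw [ENNReal.mul_rpow_of_nonneg _ _ hq0.le, ← ENNReal.rpow_mul, one_div,
          inv_mul_cancel₀ hq0.ne', ENNReal.rpow_one]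
      rw [step1]
      calc (∑' k, (A k ^ (1/t)) * (A k ^ (1/q) * B (j - k))) ^ q
          ≤ ((∑' k, (A k ^ (1/t)) ^ t) ^ (1/t) *
              (∑' k, (A k ^ (1/q) * B (j - k)) ^ q) ^ (1/q)) ^ q :=
            ENNReal.rpow_le_rpow step2 hq0.le
        _ = (∑' k, A k) ^ (q / t) * ∑' k, A k * B (j - k) ^ q := by
            simp only [e1, e2]
            rw [ENNReal.mul_rpow_of_nonneg _ _ hq0.le, ← ENNReal.rpow_mul, ← ENNReal.rpow_mul,
              one_div, one_div, inv_mul_cancel₀ hq0.ne', ENNReal.rpow_one]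
            congr 1
            rw [div_eq_inv_mul, mul_comm]
    calc (∑' j, (∑' k, A k * B (j - k)) ^ q) ^ (1/q)
        ≤ (∑' j, (∑' k, A k) ^ (q / t) * ∑' k, A k * B (j - k) ^ q) ^ (1/q) :=
          ENNReal.rpow_le_rpow (ENNReal.tsum_le_tsum pointwise) (by positivity)
      _ = ((∑' k, A k) ^ (q / t) * ∑' j, ∑' k, A k * B (j - k) ^ q) ^ (1/q) := by
          rw [ENNReal.tsum_mul_left]
      _ = ((∑' k, A k) ^ (q / t) * ((∑' k, A k) * ∑' j, B j ^ q)) ^ (1/q) := by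
          congr 2
          calc ∑' j, ∑' k, A k * B (j - k) ^ q = ∑' k, ∑' j, A k * B (j - k) ^ q :=
                ENNReal.tsum_comm
            _ = ∑' k, A k * ∑' j, B j ^ q := by
                refine tsum_congr fun k => ?_
                rw [ENNReal.tsum_mul_left, reindex k (fun j => B j ^ q)]
            _ = (∑' k, A k) * ∑' j, B j ^ q := ENNReal.tsum_mul_right
      _ = ((∑' k, A k) ^ q * ∑' j, B j ^ q) ^ (1/q) := by
          have hSA : (∑' k, A k) ^ (q / t) * (∑' k, A k) = (∑' k, A k) ^ q := by
            nth_rewrite 2 [← ENNReal.rpow_one (∑' k, A k)]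
            rw [← ENNReal.rpow_add _ _ hA0 hAtop, hqt, sub_add_cancel]
          rw [← mul_assoc, hSA]
      _ = (∑' k, A k) * (∑' j, B j ^ q) ^ (1/q) := by
          rw [ENNReal.mul_rpow_of_nonneg _ _ (by positivity), ← ENNReal.rpow_mul,
            mul_one_div, div_self hq0.ne', ENNReal.rpow_one]

/-- Weighted Young-type inequality ℓ^r_{(v)} * ℓ^p_{(ω)} ⊆ ℓ^p_{(ω)} on ℤ^d,
for 0 < r ≤ 1, r ≤ p, v submultiplicative and ω v-moderate on ℝ^d. -/
theorem stmt4 (d : ℕ) (r : ℝ) (hr0 : 0 < r) (hr1 : r ≤ 1)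
    (p : ℝ≥0∞) (hrp : ENNReal.ofReal r ≤ p)
    (ω v : (Fin d → ℝ) → ℝ) (C : ℝ) (hC : 0 < C)
    (hω : ∀ x, 0 < ω x) (hv : ∀ x, 0 < v x)
    (hveven : ∀ x, v (-x) = v x)
    (hvsub : ∀ x y, v (x + y) ≤ v x * v y)
    (hmod : ∀ x y, ω (x + y) ≤ C * ω x * v y)
    (ι : (Fin d → ℤ) → (Fin d → ℝ)) (hι : ∀ j i, ι j i = (j i : ℝ))
    (a b : (Fin d → ℤ) → ℂ)
    (ha : eLpNorm (fun j => a j * (v (ι j) : ℂ)) (ENNReal.ofReal r) Measure.count ≠ ∞)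
    (hb : eLpNorm (fun j => b j * (ω (ι j) : ℂ)) p Measure.count ≠ ∞) :
    eLpNorm (fun j => (∑' k, a k * b (j - k)) * (ω (ι j) : ℂ)) p Measure.count ≤
      ENNReal.ofReal C *
        eLpNorm (fun j => a j * (v (ι j) : ℂ)) (ENNReal.ofReal r) Measure.count *
        eLpNorm (fun j => b j * (ω (ι j) : ℂ)) p Measure.count := by
  have hp0 : p ≠ 0 := by
    intro h
    rw [h, nonpos_iff_eq_zero] at hrp
    exact absurd hrp (ENNReal.ofReal_pos.2 hr0).ne'
  set A : (Fin d → ℤ) → ℝ≥0∞ := fun k => (‖a k‖₊ : ℝ≥0∞) * ENNReal.ofReal (v (ι k)) with hA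
  set B : (Fin d → ℤ) → ℝ≥0∞ := fun k => (‖b k‖₊ : ℝ≥0∞) * ENNReal.ofReal (ω (ι k)) with hB
  have hnormA : ∀ k, (‖a k * (v (ι k) : ℂ)‖₊ : ℝ≥0∞) = A k := fun k => by
    rw [nnnorm_mul, ENNReal.coe_mul, Complex.nnnorm_real, (by exact Real.enorm_eq_ofReal (hv _).le : (‖v (ι k)‖₊ : ℝ≥0∞) = ENNReal.ofReal (v (ι k)))]
  have hnormB : ∀ k, (‖b k * (ω (ι k) : ℂ)‖₊ : ℝ≥0∞) = B k := fun k => by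
    rw [nnnorm_mul, ENNReal.coe_mul, Complex.nnnorm_real, (by exact Real.enorm_eq_ofReal (hω _).le : (‖ω (ι k)‖₊ : ℝ≥0∞) = ENNReal.ofReal (ω (ι k)))]
  have hι2 : ∀ j k : Fin d → ℤ, ι (j - k) + ι k = ι j := by
    intro j k
    funext i
    simp only [Pi.add_apply, hι, Pi.sub_apply]
    push_cast
    ring
  have reindex : ∀ (k : Fin d → ℤ) (f : (Fin d → ℤ) → ℝ≥0∞),
      ∑' j, f (j - k) = ∑' j, f j := fun k f => (Equiv.subRight k).tsum_eq f
  -- pointwise bound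
  have key : ∀ j, (‖(∑' k, a k * b (j - k)) * (ω (ι j) : ℂ)‖₊ : ℝ≥0∞) ≤
      ENNReal.ofReal C * ∑' k, A k * B (j - k) := by
    intro j
    rw [nnnorm_mul, ENNReal.coe_mul, Complex.nnnorm_real, (by exact Real.enorm_eq_ofReal (hω _).le : (‖ω (ι j)‖₊ : ℝ≥0∞) = ENNReal.ofReal (ω (ι j)))]
    have h1 : (‖∑' k, a k * b (j - k)‖₊ : ℝ≥0∞) ≤ ∑' k, (‖a k * b (j - k)‖₊ : ℝ≥0∞) := by
      by_cases hs : ∑' k, (‖a k * b (j - k)‖₊ : ℝ≥0∞) = ⊤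
      · exact hs ▸ le_top
      · have hsum : Summable fun k => ‖a k * b (j - k)‖₊ :=
          ENNReal.tsum_coe_ne_top_iff_summable.1 hs
        calc (‖∑' k, a k * b (j - k)‖₊ : ℝ≥0∞)
            ≤ (((∑' k, ‖a k * b (j - k)‖₊) : ℝ≥0) : ℝ≥0∞) :=
              ENNReal.coe_le_coe.2 (nnnorm_tsum_le hsum)
          _ = ∑' k, (‖a k * b (j - k)‖₊ : ℝ≥0∞) := ENNReal.coe_tsum hsum
    have term : ∀ k, (‖a k * b (j - k)‖₊ : ℝ≥0∞) * ENNReal.ofReal (ω (ι j)) ≤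
        ENNReal.ofReal C * (A k * B (j - k)) := by
      intro k
      have hω' : ENNReal.ofReal (ω (ι j)) ≤
          ENNReal.ofReal C * ENNReal.ofReal (ω (ι (j - k))) * ENNReal.ofReal (v (ι k)) := by
        rw [← ENNReal.ofReal_mul hC.le, ← ENNReal.ofReal_mul (mul_nonneg hC.le (hω _).le)]
        apply ENNReal.ofReal_le_ofReal
        calc ω (ι j) = ω (ι (j - k) + ι k) := by rw [hι2]
          _ ≤ C * ω (ι (j - k)) * v (ι k) := hmod _ _
      calc (‖a k * b (j - k)‖₊ : ℝ≥0∞) * ENNReal.ofReal (ω (ι j))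
          ≤ (‖a k * b (j - k)‖₊ : ℝ≥0∞) *
            (ENNReal.ofReal C * ENNReal.ofReal (ω (ι (j - k))) * ENNReal.ofReal (v (ι k))) :=
            mul_le_mul_right hω' _
        _ = ENNReal.ofReal C * (A k * B (j - k)) := by
            rw [nnnorm_mul, ENNReal.coe_mul, hA, hB]
            ring
    calc (‖∑' k, a k * b (j - k)‖₊ : ℝ≥0∞) * ENNReal.ofReal (ω (ι j))
        ≤ (∑' k, (‖a k * b (j - k)‖₊ : ℝ≥0∞)) * ENNReal.ofReal (ω (ι j)) :=
          mul_le_mul_left h1 _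
      _ = ∑' k, (‖a k * b (j - k)‖₊ : ℝ≥0∞) * ENNReal.ofReal (ω (ι j)) :=
          ENNReal.tsum_mul_right.symm
      _ ≤ ∑' k, ENNReal.ofReal C * (A k * B (j - k)) := ENNReal.tsum_le_tsum term
      _ = ENNReal.ofReal C * ∑' k, A k * B (j - k) := ENNReal.tsum_mul_left
  -- norm of a-side
  have hrne : (ENNReal.ofReal r) ≠ 0 := (ENNReal.ofReal_pos.2 hr0).ne'
  have eA : eLpNorm (fun j => a j * (v (ι j) : ℂ)) (ENNReal.ofReal r) Measure.count
      = (∑' k, A k ^ r) ^ (1 / r) := by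
    rw [eLpNorm_eq_lintegral_rpow_enorm_toReal hrne ENNReal.ofReal_ne_top, lintegral_count,
      ENNReal.toReal_ofReal hr0.le]
    congr 1
    exact tsum_congr fun k => by rw [← hnormA]; rfl
  rw [eA]
  by_cases hptop : p = ∞
  · subst hptop
    rw [eLpNorm_exponent_top, eLpNorm_exponent_top, eLpNormEssSup_count, eLpNormEssSup_count]
    have hBsup : ∀ m, B m ≤ ⨆ n, (‖b n * (ω (ι n) : ℂ)‖₊ : ℝ≥0∞) := by
      intro m
      rw [← hnormB m]
      exact le_iSup (fun n => (‖b n * (ω (ι n) : ℂ)‖₊ : ℝ≥0∞)) m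
    refine iSup_le fun j => (key j).trans ?_
    calc ENNReal.ofReal C * ∑' k, A k * B (j - k)
        ≤ ENNReal.ofReal C *
          ∑' k, A k * ⨆ n, (‖b n * (ω (ι n) : ℂ)‖₊ : ℝ≥0∞) := by
          exact mul_le_mul_right (ENNReal.tsum_le_tsum fun k =>
            mul_le_mul_right (hBsup _) _) _
      _ = ENNReal.ofReal C * ((∑' k, A k) * ⨆ n, (‖b n * (ω (ι n) : ℂ)‖₊ : ℝ≥0∞)) := by
          rw [ENNReal.tsum_mul_right]
      _ ≤ ENNReal.ofReal C *
          ((∑' k, A k ^ r) ^ (1 / r) * ⨆ n, (‖b n * (ω (ι n) : ℂ)‖₊ : ℝ≥0∞)) :=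
          mul_le_mul_right (mul_le_mul_left (aux_l1_le_lr A hr0 hr1) _) _
      _ = ENNReal.ofReal C * (∑' k, A k ^ r) ^ (1 / r) *
            ⨆ n, (‖b n * (ω (ι n) : ℂ)‖₊ : ℝ≥0∞) := by rw [mul_assoc]
  · set q := p.toReal with hq
    have hq0 : 0 < q := ENNReal.toReal_pos hp0 hptop
    have hrq : r ≤ q := by
      have := ENNReal.toReal_mono hptop hrp
      rwa [ENNReal.toReal_ofReal hr0.le] at this
    have eB : eLpNorm (fun j => b j * (ω (ι j) : ℂ)) p Measure.count
        = (∑' k, B k ^ q) ^ (1 / q) := by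
      rw [eLpNorm_eq_lintegral_rpow_enorm_toReal hp0 hptop, lintegral_count]
      congr 1
      exact tsum_congr fun k => by rw [← hnormB]; rfl
    have eF : eLpNorm (fun j => (∑' k, a k * b (j - k)) * (ω (ι j) : ℂ)) p Measure.count
        = (∑' j, (‖(∑' k, a k * b (j - k)) * (ω (ι j) : ℂ)‖₊ : ℝ≥0∞) ^ q) ^ (1 / q) := by
      rw [eLpNorm_eq_lintegral_rpow_enorm_toReal hp0 hptop, lintegral_count]; rfl
    rw [eB, eF]
    set S : (Fin d → ℤ) → ℝ≥0∞ := fun j => ∑' k, A k * B (j - k) with hS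
    have step0 : (∑' j, (‖(∑' k, a k * b (j - k)) * (ω (ι j) : ℂ)‖₊ : ℝ≥0∞) ^ q) ^ (1 / q)
        ≤ ENNReal.ofReal C * (∑' j, S j ^ q) ^ (1 / q) := by
      calc (∑' j, (‖(∑' k, a k * b (j - k)) * (ω (ι j) : ℂ)‖₊ : ℝ≥0∞) ^ q) ^ (1 / q)
          ≤ (∑' j, (ENNReal.ofReal C * S j) ^ q) ^ (1 / q) :=
            ENNReal.rpow_le_rpow (ENNReal.tsum_le_tsum fun j =>
              ENNReal.rpow_le_rpow (key j) hq0.le) (by positivity)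
        _ = ((ENNReal.ofReal C) ^ q * ∑' j, S j ^ q) ^ (1 / q) := by
            simp only [ENNReal.mul_rpow_of_nonneg _ _ hq0.le]
            rw [ENNReal.tsum_mul_left]
        _ = ENNReal.ofReal C * (∑' j, S j ^ q) ^ (1 / q) := by
            rw [ENNReal.mul_rpow_of_nonneg _ _ (by positivity), ← ENNReal.rpow_mul,
              mul_one_div, div_self hq0.ne', ENNReal.rpow_one]
    refine step0.trans ?_
    rw [mul_assoc]
    refine mul_le_mul_right ?_ _
    rcases le_total q 1 with hq1 | hq1
    · -- quasi-Banach case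
      have step : ∑' j, S j ^ q ≤ (∑' k, A k ^ q) * ∑' j, B j ^ q := by
        calc ∑' j, S j ^ q ≤ ∑' j, ∑' k, (A k * B (j - k)) ^ q :=
              ENNReal.tsum_le_tsum fun j => aux_rpow_tsum_le _ hq0 hq1
          _ = ∑' j, ∑' k, A k ^ q * B (j - k) ^ q := by
              simp only [ENNReal.mul_rpow_of_nonneg _ _ hq0.le]
          _ = ∑' k, ∑' j, A k ^ q * B (j - k) ^ q := ENNReal.tsum_comm
          _ = ∑' k, A k ^ q * ∑' j, B j ^ q := by
              refine tsum_congr fun k => ?_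
              rw [ENNReal.tsum_mul_left, reindex k (fun j => B j ^ q)]
          _ = (∑' k, A k ^ q) * ∑' j, B j ^ q := ENNReal.tsum_mul_right
      calc (∑' j, S j ^ q) ^ (1 / q)
          ≤ ((∑' k, A k ^ q) * ∑' j, B j ^ q) ^ (1 / q) :=
            ENNReal.rpow_le_rpow step (by positivity)
        _ = (∑' k, A k ^ q) ^ (1 / q) * (∑' j, B j ^ q) ^ (1 / q) :=
            ENNReal.mul_rpow_of_nonneg _ _ (by positivity)
        _ ≤ (∑' k, A k ^ r) ^ (1 / r) * (∑' j, B j ^ q) ^ (1 / q) :=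
            mul_le_mul_left (aux_lr_le_lq A hr0 hrq) _
    · -- Banach case
      calc (∑' j, S j ^ q) ^ (1 / q)
          ≤ (∑' k, A k) * (∑' j, B j ^ q) ^ (1 / q) := aux_young A B hq1
        _ ≤ (∑' k, A k ^ r) ^ (1 / r) * (∑' j, B j ^ q) ^ (1 / q) :=
            mul_le_mul_left (aux_l1_le_lr A hr0 hr1) _
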